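/- Suppose preferences are uniform in each layer and let 1 ≤ α ≤ ℓ. Define a directed graph G on vertex set U with an arc (u,u') whenever u ≻_W^{(i)} u' holds in at least ℓ−α+1 layers i, and a directed graph H on vertex set W with an arc (w,w') whenever w ≻_U^{(i)} w' holds in at least ℓ−α+1 layers i. Then a matching M is α-individually stable if and only if both of the following hold: (1) for all u,u' ∈ U, if (u,u') is an arc of G then (M(u'),M(u)) is not an arc of H; and (2) for all w,w' ∈ W, if (w,w') is an arc of H then (M⁻¹(w'),M⁻¹(w)) is not an arc of G, where M⁻¹(w) denotes the agent of U matched with w. -/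

import Mathlib

open Finset

/-!
Uniform multi-modal stable marriage framework: in each layer, all agents of U share the
same strict order over W and all agents of W share the same strict order over U.
pU i w is the rank of w ∈ W in the common order of the U-agents in layer i
(smaller rank = more preferred), so w ≻_U^{(i)} w' iff pU i w < pU i w'.
pW i u is the rank of u ∈ U in the common order of the W-agents in layer i.
A matching is a bijection M : Fin n ≃ Fin n from U to W.
-/

/-- M is α-individually stable (for uniform preferences). -/
def UIndivStable (n ℓ : ℕ) (pU pW : Fin ℓ → Fin n → ℕ)
    (M : Fin n ≃ Fin n) (α : ℕ) : Prop :=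
  ∀ u w : Fin n, M u ≠ w →
    ∃ S : Finset (Fin ℓ), S.card = α ∧
      ((∀ i ∈ S, pU i (M u) < pU i w) ∨ (∀ i ∈ S, pW i (M.symm w) < pW i u))

/-- Arc (u, u') of the digraph G on U: the W-agents prefer u to u' in at least
ℓ − α + 1 layers. -/
def ArcG (n ℓ α : ℕ) (pW : Fin ℓ → Fin n → ℕ) (u u' : Fin n) : Prop :=
  ℓ - α + 1 ≤ (Finset.univ.filter fun i : Fin ℓ => pW i u < pW i u').card

/-- Arc (w, w') of the digraph H on W: the U-agents prefer w to w' in at least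
ℓ − α + 1 layers. -/
def ArcH (n ℓ α : ℕ) (pU : Fin ℓ → Fin n → ℕ) (w w' : Fin n) : Prop :=
  ℓ - α + 1 ≤ (Finset.univ.filter fun i : Fin ℓ => pU i w < pU i w').card


lemma exists_subset_card_forall {ℓ α : ℕ} (P : Fin ℓ → Prop) [DecidablePred P] :
    (∃ S : Finset (Fin ℓ), S.card = α ∧ ∀ i ∈ S, P i) ↔
      α ≤ (Finset.univ.filter P).card := by
  constructor
  · rintro ⟨S, hS, hP⟩
    rw [← hS]
    exact Finset.card_le_card fun i hi => Finset.mem_filter.mpr ⟨Finset.mem_univ i, hP i hi⟩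
  · intro h
    obtain ⟨S, hSsub, hScard⟩ := Finset.exists_subset_card_eq h
    exact ⟨S, hScard, fun i hi => (Finset.mem_filter.mp (hSsub hi)).2⟩

lemma pair_key {n ℓ α : ℕ} (hαℓ : α ≤ ℓ)
    (g : Fin ℓ → Fin n → ℕ) (hg : ∀ i, Function.Injective (g i))
    {a b : Fin n} (hab : a ≠ b) :
    (∃ S : Finset (Fin ℓ), S.card = α ∧ ∀ i ∈ S, g i a < g i b) ↔
      ¬ (ℓ - α + 1 ≤ (Finset.univ.filter fun i => g i b < g i a).card) := by
  rw [exists_subset_card_forall]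
  have h2 : (Finset.univ.filter fun i => ¬ g i a < g i b) =
      Finset.univ.filter fun i => g i b < g i a := by
    apply Finset.filter_congr
    intro i _
    have hne : g i a ≠ g i b := fun h => hab (hg i h)
    constructor <;> omega
  have h1 := Finset.card_filter_add_card_filter_not
    (s := (Finset.univ : Finset (Fin ℓ))) (p := fun i => g i a < g i b)
  rw [h2, Finset.card_univ, Fintype.card_fin] at h1
  omega

lemma not_arc_self {ℓ n α : ℕ} (g : Fin ℓ → Fin n → ℕ) (a : Fin n) :
    ¬ (ℓ - α + 1 ≤ (Finset.univ.filter fun i : Fin ℓ => g i a < g i a).card) := by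
  simp

/-- For uniform preferences and 1 ≤ α ≤ ℓ, a matching M is α-individually
stable iff (1) for all u,u' ∈ U with an arc (u,u') in G, (M u', M u) is not an arc of H,
and (2) for all w,w' ∈ W with an arc (w,w') in H, (M⁻¹ w', M⁻¹ w) is not an arc of G. -/
theorem uniform_indivStable_iff_graphs (n ℓ : ℕ) (hn : 1 ≤ n) (hℓ : 1 ≤ ℓ)
    (α : ℕ) (hα1 : 1 ≤ α) (hαℓ : α ≤ ℓ)
    (pU pW : Fin ℓ → Fin n → ℕ)
    (hpU : ∀ i, Function.Injective (pU i))
    (hpW : ∀ i, Function.Injective (pW i))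
    (M : Fin n ≃ Fin n) :
    UIndivStable n ℓ pU pW M α ↔
      ((∀ u u' : Fin n, ArcG n ℓ α pW u u' → ¬ ArcH n ℓ α pU (M u') (M u)) ∧
       (∀ w w' : Fin n, ArcH n ℓ α pU w w' → ¬ ArcG n ℓ α pW (M.symm w') (M.symm w))) := by
  have key : ∀ u w : Fin n, M u ≠ w →
      ((∃ S : Finset (Fin ℓ), S.card = α ∧
          ((∀ i ∈ S, pU i (M u) < pU i w) ∨ (∀ i ∈ S, pW i (M.symm w) < pW i u))) ↔
        (¬ ArcH n ℓ α pU w (M u) ∨ ¬ ArcG n ℓ α pW u (M.symm w))) := by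
    intro u w huw
    have hne2 : M.symm w ≠ u := by
      intro h
      apply huw
      rw [← h, Equiv.apply_symm_apply]
    have h1 := pair_key (a := M u) (b := w) hαℓ pU hpU huw
    have h2 := pair_key (a := M.symm w) (b := u) hαℓ pW hpW hne2
    unfold ArcH ArcG
    constructor
    · rintro ⟨S, hS, hor | hor⟩
      · exact Or.inl (h1.mp ⟨S, hS, hor⟩)
      · exact Or.inr (h2.mp ⟨S, hS, hor⟩)
    · rintro (h | h)
      · obtain ⟨S, hS, hP⟩ := h1.mpr h; exact ⟨S, hS, Or.inl hP⟩
      · obtain ⟨S, hS, hP⟩ := h2.mpr h; exact ⟨S, hS, Or.inr hP⟩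
  constructor
  · intro hstab
    constructor
    · intro u u' hG hH
      by_cases h : u = u'
      · subst h; exact not_arc_self pW u hG
      · have huw : M u ≠ M u' := fun he => h (M.injective he)
        have hk := (key u (M u') huw).mp (hstab u (M u') huw)
        rw [Equiv.symm_apply_apply] at hk
        rcases hk with h' | h'
        · exact h' hH
        · exact h' hG
    · intro w w' hH hG
      by_cases h : w = w'
      · subst h; exact not_arc_self pU w hH
      · have huw : M (M.symm w') ≠ w := by
          rw [Equiv.apply_symm_apply]; exact fun he => h he.symm
        have hk := (key (M.symm w') w huw).mp (hstab _ w huw)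
        rw [Equiv.apply_symm_apply] at hk
        rcases hk with h' | h'
        · exact h' hH
        · exact h' hG
  · rintro ⟨h1, _h2⟩ u w huw
    apply (key u w huw).mpr
    by_cases hG : ArcG n ℓ α pW u (M.symm w)
    · left
      have := h1 u (M.symm w) hG
      rwa [Equiv.apply_symm_apply] at this
    · exact Or.inr hG
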